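/- Let P and Q be distributions on a finite set X, M = (P+Q)/2, and let f: X → [0, Ĥ] be bounded. Then E_{x∼Q}[f(x)] − E_{x∼P}[f(x)] ≤ Ĥ · √(2 · D_JS(P ‖ Q)). -/

import Mathlib

open Finset Real

/-- A probability mass function on a finite type. -/
def IsPMF {α : Type*} [Fintype α] (p : α → ℝ) : Prop :=
  (∀ x, 0 ≤ p x) ∧ ∑ x, p x = 1

/-- Shannon entropy (natural log). -/
noncomputable def entropy {α : Type*} [Fintype α] (p : α → ℝ) : ℝ :=
  -∑ x, p x * Real.log (p x)

/-- Kullback–Leibler divergence (natural log). -/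
noncomputable def klDiv {α : Type*} [Fintype α] (p q : α → ℝ) : ℝ :=
  ∑ x, p x * Real.log (p x / q x)

/-- Jensen–Shannon divergence. -/
noncomputable def jsDiv {α : Type*} [Fintype α] (p q : α → ℝ) : ℝ :=
  (klDiv p (fun x => (p x + q x) / 2) + klDiv q (fun x => (p x + q x) / 2)) / 2

/-- Un-halved (ℓ¹) total variation distance. -/
noncomputable def tvL1 {α : Type*} [Fintype α] (p q : α → ℝ) : ℝ :=
  ∑ x, |p x - q x|
noncomputable def phiAux (t : ℝ) : ℝ := (t + 1) * Real.log t - 2 * (t - 1)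

lemma phiAux_hasDeriv {t : ℝ} (ht : 0 < t) :
    HasDerivAt phiAux (Real.log t + 1 / t - 1) t := by
  have h1 : HasDerivAt (fun s : ℝ => s + 1) 1 t := by
    simpa using (hasDerivAt_id t).add_const 1
  have h2 := Real.hasDerivAt_log (ne_of_gt ht)
  have h3 : HasDerivAt (fun s : ℝ => 2 * (s - 1)) 2 t := by
    simpa using ((hasDerivAt_id t).sub_const 1).const_mul 2
  have := (h1.mul h2).sub h3
  refine this.congr_deriv ?_
  field_simp
  ring

lemma phiAux_mono : MonotoneOn phiAux (Set.Ioi 0) := by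
  have hint : interior (Set.Ioi (0:ℝ)) = Set.Ioi 0 := interior_Ioi
  apply monotoneOn_of_deriv_nonneg (convex_Ioi 0)
  · exact fun t ht => (phiAux_hasDeriv ht).continuousAt.continuousWithinAt
  · rw [hint]; exact fun t ht => (phiAux_hasDeriv ht).differentiableAt.differentiableWithinAt
  · intro t ht
    rw [hint] at ht
    rw [(phiAux_hasDeriv ht).deriv]
    have := Real.one_sub_inv_le_log_of_pos ht
    rw [inv_eq_one_div] at this
    linarith

lemma phiAux_one : phiAux 1 = 0 := by simp [phiAux]

noncomputable def hAux (t : ℝ) : ℝ := (2 * t + 4) * (t * Real.log t - t + 1) - 3 * (t - 1) ^ 2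

lemma hAux_hasDeriv {t : ℝ} (ht : 0 < t) : HasDerivAt hAux (4 * phiAux t) t := by
  have hlog := Real.hasDerivAt_log (ne_of_gt ht)
  have h1 : HasDerivAt (fun s : ℝ => s * Real.log s - s + 1) (Real.log t) t := by
    have h := (((hasDerivAt_id t).mul hlog).sub (hasDerivAt_id t)).add_const 1
    refine h.congr_deriv ?_
    rw [id_eq, one_mul, mul_inv_cancel₀ (ne_of_gt ht)]
    ring
  have h2 : HasDerivAt (fun s : ℝ => 2 * s + 4) 2 t := by
    simpa using ((hasDerivAt_id t).const_mul 2).add_const 4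
  have h3 : HasDerivAt (fun s : ℝ => 3 * (s - 1) ^ 2) (3 * (2 * (t - 1))) t := by
    have := (((hasDerivAt_id t).sub_const 1).pow 2).const_mul 3
    refine this.congr_deriv ?_
    rw [id_eq]
    ring
  have := (h2.mul h1).sub h3
  refine this.congr_deriv ?_
  simp only [phiAux]
  ring

lemma hAux_one : hAux 1 = 0 := by simp [hAux]

lemma hAux_nonneg {t : ℝ} (ht : 0 < t) : 0 ≤ hAux t := by
  rcases le_total 1 t with h1 | h1
  · have mono : MonotoneOn hAux (Set.Ici 1) := by
      apply monotoneOn_of_deriv_nonneg (convex_Ici 1)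
      · exact fun s hs => (hAux_hasDeriv (lt_of_lt_of_le one_pos hs)).continuousAt.continuousWithinAt
      · rw [interior_Ici]
        exact fun s hs => (hAux_hasDeriv (lt_trans one_pos hs)).differentiableAt.differentiableWithinAt
      · intro s hs
        rw [interior_Ici] at hs
        have hs0 : (0:ℝ) < s := lt_trans one_pos hs
        rw [(hAux_hasDeriv hs0).deriv]
        have : phiAux 1 ≤ phiAux s :=
          phiAux_mono (Set.mem_Ioi.mpr one_pos) (Set.mem_Ioi.mpr hs0) (le_of_lt hs)
        rw [phiAux_one] at this
        linarith
    have := mono (Set.mem_Ici.mpr le_rfl) (Set.mem_Ici.mpr h1) h1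
    rwa [hAux_one] at this
  · have anti : AntitoneOn hAux (Set.Ioc 0 1) := by
      apply antitoneOn_of_deriv_nonpos (convex_Ioc 0 1)
      · exact fun s hs => (hAux_hasDeriv hs.1).continuousAt.continuousWithinAt
      · rw [interior_Ioc]
        exact fun s hs => (hAux_hasDeriv hs.1).differentiableAt.differentiableWithinAt
      · intro s hs
        rw [interior_Ioc] at hs
        rw [(hAux_hasDeriv hs.1).deriv]
        have : phiAux s ≤ phiAux 1 :=
          phiAux_mono (Set.mem_Ioi.mpr hs.1) (Set.mem_Ioi.mpr one_pos) (le_of_lt hs.2)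
        rw [phiAux_one] at this
        linarith
    have := anti (Set.mem_Ioc.mpr ⟨ht, h1⟩) (Set.mem_Ioc.mpr ⟨one_pos, le_rfl⟩) h1
    rwa [hAux_one] at this

lemma pointwise_kl {a b : ℝ} (ha : 0 ≤ a) (hb : 0 ≤ b) (h0 : b = 0 → a = 0) :
    3 * (a - b) ^ 2 / (2 * a + 4 * b) ≤ a * Real.log (a / b) - a + b := by
  rcases eq_or_lt_of_le hb with hb0 | hbpos
  · have hb' : b = 0 := hb0.symm
    have ha' := h0 hb'
    rw [ha', hb']
    simp
  rcases eq_or_lt_of_le ha with ha0 | hapos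
  · rw [← ha0]
    have h4 : (0:ℝ) < 2 * 0 + 4 * b := by linarith
    rw [div_le_iff₀ h4]
    nlinarith
  · set t := a / b with htdef
    have ht : 0 < t := div_pos hapos hbpos
    have key := hAux_nonneg ht
    have h24 : (0:ℝ) < 2 * t + 4 := by linarith
    have hg : 3 * (t - 1) ^ 2 / (2 * t + 4) ≤ t * Real.log t - t + 1 := by
      rw [div_le_iff₀ h24]
      simp only [hAux] at key
      nlinarith [key]
    have hab : a = b * t := by
      rw [htdef, mul_div_assoc', mul_div_cancel_left₀ _ (ne_of_gt hbpos)]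
    calc 3 * (a - b) ^ 2 / (2 * a + 4 * b) = b * (3 * (t - 1) ^ 2 / (2 * t + 4)) := by
          rw [hab]; field_simp
      _ ≤ b * (t * Real.log t - t + 1) :=
          mul_le_mul_of_nonneg_left hg hb
      _ = a * Real.log (a / b) - a + b := by rw [hab, mul_div_cancel_left₀ _ (ne_of_gt hbpos)]; ring
lemma pinsker_aux {X : Type*} [Fintype X] (p m : X → ℝ) (hp : IsPMF p) (hm : IsPMF m)
    (hs : ∀ x, m x = 0 → p x = 0) :
    (∑ x, |p x - m x|) ^ 2 ≤ 2 * klDiv p m := by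
  set w : X → ℝ := fun x => 2 * p x + 4 * m x with hw
  have hwnn : ∀ x, 0 ≤ w x := fun x => by
    have := hp.1 x; have := hm.1 x; simp only [hw]; linarith
  have hkl : klDiv p m = ∑ x, (p x * Real.log (p x / m x) - p x + m x) := by
    rw [klDiv]
    rw [Finset.sum_add_distrib, Finset.sum_sub_distrib, hp.2, hm.2]
    ring
  have hpt : ∀ x, 3 * (p x - m x) ^ 2 / w x ≤ p x * Real.log (p x / m x) - p x + m x :=
    fun x => pointwise_kl (hp.1 x) (hm.1 x) (hs x)
  have hklnn : 0 ≤ klDiv p m := by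
    rw [hkl]
    apply Finset.sum_nonneg
    intro x _
    exact le_trans (div_nonneg (by positivity) (hwnn x)) (hpt x)
  have hA : ∑ x, 3 * (p x - m x) ^ 2 / w x ≤ klDiv p m := by
    rw [hkl]
    exact Finset.sum_le_sum fun x _ => hpt x
  set s := Finset.univ.filter (fun x : X => 0 < w x) with hsdef
  have hd0 : ∀ x ∈ Finset.univ, x ∉ s → |p x - m x| = 0 := by
    intro x _ hx
    have hnw : ¬ 0 < w x := by simpa [hsdef] using hx
    have hw0 : w x = 0 := le_antisymm (not_lt.mp hnw) (hwnn x)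
    have hp0 := hp.1 x; have hm0 := hm.1 x
    have : p x = 0 ∧ m x = 0 := by constructor <;> [skip; skip] <;> simp only [hw] at hw0 <;> linarith
    rw [this.1, this.2]; simp
  have hTs : ∑ x, |p x - m x| = ∑ x ∈ s, |p x - m x| :=
    (Finset.sum_subset (Finset.subset_univ s) (fun x hx hxs => hd0 x hx hxs)).symm
  have CS := Finset.sq_sum_div_le_sum_sq_div s (fun x => |p x - m x|) (g := w)
    (fun i hi => by simpa [hsdef] using hi)
  have hW6 : ∑ x ∈ s, w x ≤ 6 := by
    have h1 : ∑ x ∈ s, w x ≤ ∑ x, w x :=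
      Finset.sum_le_sum_of_subset_of_nonneg (Finset.subset_univ s) (fun x _ _ => hwnn x)
    have h2 : ∑ x, w x = 6 := by
      simp only [hw]
      rw [Finset.sum_add_distrib, ← Finset.mul_sum, ← Finset.mul_sum, hp.2, hm.2]
      norm_num
    linarith
  have hS : ∑ x ∈ s, |p x - m x| ^ 2 / w x ≤ klDiv p m / 3 := by
    have h1 : ∑ x ∈ s, 3 * (p x - m x) ^ 2 / w x ≤ ∑ x, 3 * (p x - m x) ^ 2 / w x :=
      Finset.sum_le_sum_of_subset_of_nonneg (Finset.subset_univ s)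
        (fun x _ _ => div_nonneg (by positivity) (hwnn x))
    have h2 : ∑ x ∈ s, |p x - m x| ^ 2 / w x = ∑ x ∈ s, (p x - m x) ^ 2 / w x := by
      apply Finset.sum_congr rfl; intro x _; rw [sq_abs]
    have h3 : ∑ x ∈ s, 3 * (p x - m x) ^ 2 / w x = 3 * ∑ x ∈ s, (p x - m x) ^ 2 / w x := by
      rw [Finset.mul_sum]; apply Finset.sum_congr rfl; intro x _; ring
    rw [h2]
    have := le_trans h1 hA
    rw [h3] at this
    linarith
  rcases Finset.eq_empty_or_nonempty s with hse | hsne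
  · rw [hTs, hse]
    simpa using hklnn
  · have hWpos : 0 < ∑ x ∈ s, w x := by
      apply Finset.sum_pos (fun i hi => by simpa [hsdef] using hi) hsne
    rw [hTs]
    have := (div_le_iff₀ hWpos).mp CS
    calc (∑ x ∈ s, |p x - m x|) ^ 2 ≤ (∑ x ∈ s, |p x - m x| ^ 2 / w x) * ∑ x ∈ s, w x := this
      _ ≤ (klDiv p m / 3) * 6 := by
          apply mul_le_mul hS hW6 (le_of_lt hWpos)
          linarith
      _ = 2 * klDiv p m := by ring

theorem change_of_measure_js_bound {X : Type*} [Fintype X]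
    (P Q : X → ℝ) (hP : IsPMF P) (hQ : IsPMF Q)
    (Hhat : ℝ) (f : X → ℝ) (hf : ∀ x, f x ∈ Set.Icc (0 : ℝ) Hhat) :
    (∑ x, Q x * f x) - (∑ x, P x * f x) ≤
      Hhat * Real.sqrt (2 * jsDiv P Q) := by
  obtain ⟨hP1, hP2⟩ := hP
  obtain ⟨hQ1, hQ2⟩ := hQ
  set M : X → ℝ := fun x => (P x + Q x) / 2 with hM
  have hMpmf : IsPMF M := by
    constructor
    · intro x; have := hP1 x; have := hQ1 x; simp only [hM]; linarith
    · simp only [hM]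
      rw [← Finset.sum_div, Finset.sum_add_distrib, hP2, hQ2]
      norm_num
  have hsP : ∀ x, M x = 0 → P x = 0 := by
    intro x h; have := hP1 x; have := hQ1 x; simp only [hM] at h; linarith
  have hsQ : ∀ x, M x = 0 → Q x = 0 := by
    intro x h; have := hP1 x; have := hQ1 x; simp only [hM] at h; linarith
  have pinsP := pinsker_aux P M ⟨hP1, hP2⟩ hMpmf hsP
  have pinsQ := pinsker_aux Q M ⟨hQ1, hQ2⟩ hMpmf hsQ
  set T := ∑ x, |P x - Q x| with hT
  have hT0 : 0 ≤ T := Finset.sum_nonneg fun x _ => abs_nonneg _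
  have hTP : ∑ x, |P x - M x| = T / 2 := by
    rw [hT, Finset.sum_div]
    apply Finset.sum_congr rfl
    intro x _
    have hx : P x - M x = (P x - Q x) / 2 := by simp only [hM]; ring
    rw [hx, abs_div]
    norm_num
  have hTQ : ∑ x, |Q x - M x| = T / 2 := by
    rw [hT, Finset.sum_div]
    apply Finset.sum_congr rfl
    intro x _
    have hx : Q x - M x = -((P x - Q x) / 2) := by simp only [hM]; ring
    rw [hx, abs_neg, abs_div]
    norm_num
  have hjs : (T / 2) ^ 2 ≤ 2 * jsDiv P Q := by
    have hjseq : jsDiv P Q = (klDiv P M + klDiv Q M) / 2 := rfl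
    rw [hjseq]
    rw [hTP] at pinsP
    rw [hTQ] at pinsQ
    linarith
  have hsqrt : T / 2 ≤ Real.sqrt (2 * jsDiv P Q) := by
    have := Real.sqrt_le_sqrt hjs
    rwa [Real.sqrt_sq (by linarith)] at this
  have hne : Nonempty X := by
    by_contra h
    rw [not_nonempty_iff] at h
    rw [Finset.univ_eq_empty, Finset.sum_empty] at hP2
    norm_num at hP2
  obtain ⟨x0⟩ := hne
  have hH0 : 0 ≤ Hhat := le_trans (hf x0).1 (hf x0).2
  have key : (∑ x, Q x * f x) - (∑ x, P x * f x) ≤ Hhat / 2 * T := by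
    have expand : (∑ x, Q x * f x) - (∑ x, P x * f x)
        = ∑ x, (Q x - P x) * (f x - Hhat / 2) := by
      have : ∑ x, (Q x - P x) * (f x - Hhat / 2)
          = (∑ x, Q x * f x) - (∑ x, P x * f x)
            - Hhat / 2 * ((∑ x, Q x) - (∑ x, P x)) := by
        have e1 : ∀ x, (Q x - P x) * (f x - Hhat / 2)
            = Q x * f x - P x * f x - Hhat / 2 * Q x + Hhat / 2 * P x := fun x => by ring
        simp only [e1]
        rw [Finset.sum_add_distrib, Finset.sum_sub_distrib, Finset.sum_sub_distrib,
          ← Finset.mul_sum, ← Finset.mul_sum]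
        ring
      rw [this, hP2, hQ2]
      ring
    rw [expand]
    have step : ∑ x, (Q x - P x) * (f x - Hhat / 2) ≤ ∑ x, Hhat / 2 * |P x - Q x| := by
      apply Finset.sum_le_sum
      intro x _
      have h1 : (Q x - P x) * (f x - Hhat / 2) ≤ |Q x - P x| * |f x - Hhat / 2| := by
        rw [← abs_mul]
        exact le_abs_self _
      have h2 : |f x - Hhat / 2| ≤ Hhat / 2 := by
        rw [abs_le]
        constructor
        · have := (hf x).1; linarith
        · have := (hf x).2; linarith
      calc (Q x - P x) * (f x - Hhat / 2) ≤ |Q x - P x| * |f x - Hhat / 2| := h1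
        _ ≤ |Q x - P x| * (Hhat / 2) := mul_le_mul_of_nonneg_left h2 (abs_nonneg _)
        _ = Hhat / 2 * |P x - Q x| := by rw [abs_sub_comm]; ring
    calc ∑ x, (Q x - P x) * (f x - Hhat / 2) ≤ ∑ x, Hhat / 2 * |P x - Q x| := step
      _ = Hhat / 2 * T := by rw [hT, Finset.mul_sum]
  calc (∑ x, Q x * f x) - (∑ x, P x * f x) ≤ Hhat / 2 * T := key
    _ = Hhat * (T / 2) := by ring
    _ ≤ Hhat * Real.sqrt (2 * jsDiv P Q) := mul_le_mul_of_nonneg_left hsqrt hH0
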